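/- Let b₀, b₁ ∈ ℤ_2 be odd (units of ℤ_2) and let F, G : ℤ_2 → ℤ_2 satisfy for all x ∈ ℤ_2: 2·F(x) = b₀·x if 2 ∣ x and 2·F(x) = 1 + b₁·x if 2 ∤ x; and 2·G(x) = b₁·x if 2 ∣ x and 2·G(x) = 1 + b₀·x if 2 ∤ x (so F and G are the linear-polynomial 2-adic systems with swapped linear coefficients). Then for all m, n ∈ ℤ_2: if for every k ∈ ℕ the residues of F^k(m) and G^k(n) modulo 2 differ (equivalently, F^k(m) + G^k(n) is odd for every k; the G-digit expansion of n is the digitwise complement of the F-digit expansion of m), then (2 − b₀)·n = 1 + m·(b₁ − 2). -/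

import Mathlib

private lemma zero_of_all_pow_dvd (x : ℤ_[2]) (h : ∀ k : ℕ, (2:ℤ_[2])^k ∣ x) : x = 0 := by
  have hnorm : ∀ k : ℕ, ‖x‖ ≤ (1/2:ℝ)^k := by
    intro k
    obtain ⟨y, hy⟩ := h k
    rw [hy, norm_mul]
    calc ‖(2:ℤ_[2])^k‖ * ‖y‖ ≤ ‖(2:ℤ_[2])^k‖ * 1 := by
          exact mul_le_mul_of_nonneg_left y.norm_le_one (norm_nonneg _)
      _ = ‖(2:ℤ_[2])‖^k := by rw [mul_one, norm_pow]
      _ ≤ (1/2:ℝ)^k := by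
          apply pow_le_pow_left₀ (norm_nonneg _)
          have h2 : ‖(2:ℤ_[2])‖ = 1/2 := by
            have := @PadicInt.norm_p 2 _
            norm_num at this ⊢
            exact this
          exact le_of_eq h2
  have hle : ‖x‖ ≤ 0 := by
    have ht : Filter.Tendsto (fun k : ℕ => (1/2:ℝ)^k) Filter.atTop (nhds 0) := by
      apply tendsto_pow_atTop_nhds_zero_of_lt_one <;> norm_num
    exact ge_of_tendsto ht (Filter.Eventually.of_forall hnorm)
  simpa using le_antisymm hle (norm_nonneg _)

/-- **Swapping the linear coefficients: explicit formula for `π_{F,σ,G}`**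
(`TOrderIrr`). Let `F, G : ℤ_2 → ℤ_2` be the linear-polynomial `2`-adic systems
determined by `2·F x = b₀·x` (`x` even), `2·F x = 1 + b₁·x` (`x` odd), and
`2·G x = b₁·x` (`x` even), `2·G x = 1 + b₀·x` (`x` odd), with `b₀, b₁` units (odd).
If for every `k` the residues of `F^[k] m` and `G^[k] n` modulo `2` differ
(equivalently `F^[k] m + G^[k] n` is odd for all `k`; the `G`-digit expansion of `n`
is the digitwise complement of the `F`-digit expansion of `m`), then
`(2 − b₀)·n = 1 + m·(b₁ − 2)`. -/
theorem stmt17 (b₀ b₁ : ℤ_[2]) (hb₀ : IsUnit b₀) (hb₁ : IsUnit b₁)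
    (F G : ℤ_[2] → ℤ_[2])
    (hF0 : ∀ x : ℤ_[2], (2 : ℤ_[2]) ∣ x → (2 : ℤ_[2]) * F x = b₀ * x)
    (hF1 : ∀ x : ℤ_[2], ¬(2 : ℤ_[2]) ∣ x → (2 : ℤ_[2]) * F x = 1 + b₁ * x)
    (hG0 : ∀ x : ℤ_[2], (2 : ℤ_[2]) ∣ x → (2 : ℤ_[2]) * G x = b₁ * x)
    (hG1 : ∀ x : ℤ_[2], ¬(2 : ℤ_[2]) ∣ x → (2 : ℤ_[2]) * G x = 1 + b₀ * x) :
    ∀ m n : ℤ_[2], (∀ k : ℕ, ¬(2 : ℤ_[2]) ∣ (F^[k] m + G^[k] n)) →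
      (2 - b₀) * n = 1 + m * (b₁ - 2) := by
  have par : ∀ x : ℤ_[2], (2:ℤ_[2]) ∣ x ∨ (2:ℤ_[2]) ∣ (x - 1) := by
    intro x
    have h1 := PadicInt.appr_spec 1 x
    have h2 := PadicInt.appr_lt x 1
    rw [Ideal.mem_span_singleton] at h1
    simp only [pow_one] at h1 h2
    interval_cases h : x.appr 1
    · left; simpa using h1
    · right; simpa using h1
  have key : ∀ k : ℕ, ∀ m n : ℤ_[2], (∀ j : ℕ, ¬(2 : ℤ_[2]) ∣ (F^[j] m + G^[j] n)) →
      (2:ℤ_[2])^k ∣ (2 - b₀) * n - (1 + m * (b₁ - 2)) := by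
    intro k
    induction k with
    | zero => intro m n _; simp
    | succ k ih =>
      intro m n hmn
      have h' : ∀ j : ℕ, ¬(2 : ℤ_[2]) ∣ (F^[j] (F m) + G^[j] (G n)) := by
        intro j
        rw [← Function.iterate_succ_apply, ← Function.iterate_succ_apply]
        exact hmn (j+1)
      have hk := ih (F m) (G n) h'
      have h0 := hmn 0
      simp only [Function.iterate_zero_apply] at h0
      by_cases hm : (2:ℤ_[2]) ∣ m
      · have hn : ¬(2:ℤ_[2]) ∣ n := fun hn => h0 (dvd_add hm hn)
        have e1 := hF0 m hm
        have e2 := hG1 n hn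
        have heq : (2:ℤ_[2]) * ((2 - b₀) * G n - (1 + F m * (b₁ - 2)))
            = b₀ * ((2 - b₀) * n - (1 + m * (b₁ - 2))) := by
          have h3 : (2:ℤ_[2]) * ((2 - b₀) * G n - (1 + F m * (b₁ - 2)))
              = (2 - b₀) * (2 * G n) - (2 + (2 * F m) * (b₁ - 2)) := by ring
          rw [h3, e1, e2]; ring
        have hd : (2:ℤ_[2])^(k+1) ∣ b₀ * ((2 - b₀) * n - (1 + m * (b₁ - 2))) := by
          rw [← heq, pow_succ, mul_comm ((2:ℤ_[2])^k) 2]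
          exact mul_dvd_mul_left 2 hk
        exact hb₀.dvd_mul_left.mp hd
      · have hm1 : (2:ℤ_[2]) ∣ (m - 1) := (par m).resolve_left hm
        have hn : (2:ℤ_[2]) ∣ n := by
          rcases par n with h | h
          · exact h
          · exact absurd (by
              have h4 : m + n = (m - 1) + (n - 1) + 2 := by ring
              rw [h4]
              exact dvd_add (dvd_add hm1 h) dvd_rfl) h0
        have e1 := hF1 m hm
        have e2 := hG0 n hn
        have heq : (2:ℤ_[2]) * ((2 - b₀) * G n - (1 + F m * (b₁ - 2)))
            = b₁ * ((2 - b₀) * n - (1 + m * (b₁ - 2))) := by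
          have h3 : (2:ℤ_[2]) * ((2 - b₀) * G n - (1 + F m * (b₁ - 2)))
              = (2 - b₀) * (2 * G n) - (2 + (2 * F m) * (b₁ - 2)) := by ring
          rw [h3, e1, e2]; ring
        have hd : (2:ℤ_[2])^(k+1) ∣ b₁ * ((2 - b₀) * n - (1 + m * (b₁ - 2))) := by
          rw [← heq, pow_succ, mul_comm ((2:ℤ_[2])^k) 2]
          exact mul_dvd_mul_left 2 hk
        exact hb₁.dvd_mul_left.mp hd
  intro m n hmn
  have hz := zero_of_all_pow_dvd _ (fun k => key k m n hmn)
  linear_combination hz
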